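/- Let μ and ν be compactly supported Borel probability measures on ℝ^d and let c : ℝ^d × ℝ^d → ℝ be continuous. For h > 0 let μ^h and ν^h be the discretized measures of μ and ν on the grid hℤ^d, and let W_c(μ^h, ν^h) = inf { ∫ c dπ : π a coupling of μ^h and ν^h } denote the optimal transportation cost between μ^h and ν^h, and similarly W_c(μ, ν) for μ and ν. Then W_c(μ^h, ν^h) → W_c(μ, ν) as h → 0. -/

import Mathlib

open MeasureTheory Filter Topology

noncomputable section

/-- Weak convergence of a sequence of measures: the integrals of every bounded
continuous function converge. -/
def WeakConvSeq {α : Type*} [MeasurableSpace α] [TopologicalSpace α]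
    (μs : ℕ → Measure α) (μ : Measure α) : Prop :=
  ∀ f : BoundedContinuousFunction α ℝ,
    Tendsto (fun k => ∫ x, f x ∂(μs k)) atTop (𝓝 (∫ x, f x ∂μ))

/-- A coupling (transference plan) of `μ` and `ν`: a measure on the product
whose marginals are `μ` and `ν`. -/
def IsCoupling {α β : Type*} [MeasurableSpace α] [MeasurableSpace β]
    (π : Measure (α × β)) (μ : Measure α) (ν : Measure β) : Prop :=
  π.map Prod.fst = μ ∧ π.map Prod.snd = ν

/-- An optimal coupling of `μ` and `ν` for the cost `c`. -/
def IsOptimalCoupling {α β : Type*} [MeasurableSpace α] [MeasurableSpace β]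
    (c : α × β → ℝ) (π : Measure (α × β)) (μ : Measure α) (ν : Measure β) : Prop :=
  IsCoupling π μ ν ∧
    ∀ π' : Measure (α × β), IsCoupling π' μ ν → ∫ q, c q ∂π ≤ ∫ q, c q ∂π'

/-- The grid point `z = h·m` of the grid `hℤ^d`. -/
def gridPoint (d : ℕ) (h : ℝ) (m : Fin d → ℤ) : Fin d → ℝ :=
  fun i => h * m i

/-- The half-open axis-aligned cube `R_h(z) = z + [-h/2, h/2)^d` of side length `h`
centered at the grid point `z = h·m`.  These cubes partition `ℝ^d`. -/
def gridCube (d : ℕ) (h : ℝ) (m : Fin d → ℤ) : Set (Fin d → ℝ) :=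
  {x | ∀ i, h * m i - h / 2 ≤ x i ∧ x i < h * m i + h / 2}

/-- The discretized measure `μ^h = Σ_{z ∈ hℤ^d} μ(R_h(z)) δ_z`. -/
def discretize {d : ℕ} (h : ℝ) (μ : Measure (Fin d → ℝ)) : Measure (Fin d → ℝ) :=
  Measure.sum fun m : Fin d → ℤ =>
    μ (gridCube d h m) • Measure.dirac (gridPoint d h m)

/-- The optimal transportation cost `W_c(μ, ν) = inf { ∫ c dπ : π a coupling of μ and ν }`. -/
def transportCost {α β : Type*} [MeasurableSpace α] [MeasurableSpace β]
    (c : α × β → ℝ) (μ : Measure α) (ν : Measure β) : ℝ :=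
  sInf {r : ℝ | ∃ π : Measure (α × β), IsCoupling π μ ν ∧ r = ∫ q, c q ∂π}

open ENNReal Metric

namespace OTAux

/-- the rounding map onto the grid -/
def Tmap (d : ℕ) (h : ℝ) (x : Fin d → ℝ) : Fin d → ℝ :=
  gridPoint d h (fun i => round (x i / h))

lemma round_eq_iff {h x : ℝ} (hh : 0 < h) {m : ℤ} :
    round (x / h) = m ↔ h * m - h / 2 ≤ x ∧ x < h * m + h / 2 := by
  rw [round_eq, Int.floor_eq_iff]
  constructor
  · rintro ⟨h1, h2⟩
    constructor
    · nlinarith [(le_div_iff₀ hh).mp (by linarith : (m : ℝ) - 1/2 ≤ x / h), hh]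
    · nlinarith [(div_lt_iff₀ hh).mp (by linarith : x / h < (m : ℝ) + 1/2)]
  · rintro ⟨h1, h2⟩
    constructor
    · have : (m : ℝ) - 1/2 ≤ x / h := (le_div_iff₀ hh).mpr (by nlinarith)
      linarith
    · have : x / h < (m : ℝ) + 1/2 := (div_lt_iff₀ hh).mpr (by nlinarith)
      linarith

lemma mem_gridCube_iff {d : ℕ} {h : ℝ} (hh : 0 < h) {x : Fin d → ℝ} {m : Fin d → ℤ} :
    x ∈ gridCube d h m ↔ (fun i => round (x i / h)) = m := by
  simp only [gridCube, Set.mem_setOf_eq, funext_iff]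
  exact forall_congr' fun i => ((round_eq_iff hh).symm)

lemma mem_gridCube_round {d : ℕ} {h : ℝ} (hh : 0 < h) (x : Fin d → ℝ) :
    x ∈ gridCube d h (fun i => round (x i / h)) := (mem_gridCube_iff hh).mpr rfl

lemma Tmap_eq_of_mem {d : ℕ} {h : ℝ} (hh : 0 < h) {x : Fin d → ℝ} {m : Fin d → ℤ}
    (hx : x ∈ gridCube d h m) : Tmap d h x = gridPoint d h m := by
  rw [Tmap, (mem_gridCube_iff hh).mp hx]

lemma gridPoint_injective {d : ℕ} {h : ℝ} (hh : h ≠ 0) :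
    Function.Injective (gridPoint d h) := by
  intro m m' he
  funext i
  have := congrFun he i
  simp only [gridPoint] at this
  exact_mod_cast mul_left_cancel₀ hh this

lemma gridCube_disjoint {d : ℕ} {h : ℝ} (hh : 0 < h) :
    Pairwise (Function.onFun Disjoint (gridCube d h)) := by
  intro m m' hne
  rw [Function.onFun, Set.disjoint_left]
  intro x hx hx'
  exact hne (((mem_gridCube_iff hh).mp hx).symm.trans ((mem_gridCube_iff hh).mp hx'))

lemma measurableSet_gridCube {d : ℕ} {h : ℝ} (m : Fin d → ℤ) :
    MeasurableSet (gridCube d h m) := by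
  have : gridCube d h m = ⋂ i, (fun x : Fin d → ℝ => x i) ⁻¹' Set.Ico (h * m i - h / 2) (h * m i + h / 2) := by
    ext x; simp [gridCube, Set.mem_Ico]
  rw [this]
  exact MeasurableSet.iInter fun i => (measurable_pi_apply i) measurableSet_Ico

lemma measurable_Tmap {d : ℕ} {h : ℝ} : Measurable (Tmap d h) := by
  apply measurable_pi_lambda
  intro i
  have hg : Measurable fun x : Fin d → ℝ => round (x i / h) := by
    simp only [round_eq]
    exact Int.measurable_floor.comp (by fun_prop)
  exact measurable_const.mul ((measurable_from_top (f := (Int.cast : ℤ → ℝ))).comp hg)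

lemma dist_Tmap_le {d : ℕ} {h : ℝ} (hh : 0 < h) (x : Fin d → ℝ) :
    dist (Tmap d h x) x ≤ h / 2 := by
  rw [dist_pi_le_iff (by linarith)]
  intro i
  rw [Real.dist_eq]
  have h1 : |x i / h - (round (x i / h) : ℝ)| ≤ 1 / 2 := abs_sub_round _
  have : Tmap d h x i - x i = -(h * (x i / h - (round (x i / h) : ℝ))) := by
    simp only [Tmap, gridPoint]
    field_simp
    ring
  rw [this, abs_neg, abs_mul, abs_of_pos hh]
  calc h * |x i / h - (round (x i / h):ℝ)| ≤ h * (1/2) := by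
        exact mul_le_mul_of_nonneg_left h1 hh.le
    _ = h / 2 := by ring


lemma discretize_eq_map {d : ℕ} {h : ℝ} (hh : 0 < h) (μ : Measure (Fin d → ℝ)) :
    discretize h μ = μ.map (Tmap d h) := by
  classical
  ext s hs
  rw [Measure.map_apply measurable_Tmap hs, discretize, Measure.sum_apply _ hs]
  have key : Tmap d h ⁻¹' s
      = ⋃ m, if gridPoint d h m ∈ s then gridCube d h m else ∅ := by
    ext x
    simp only [Set.mem_preimage, Set.mem_iUnion]
    constructor
    · intro hx
      refine ⟨fun i => round (x i / h), ?_⟩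
      rw [if_pos (show (gridPoint d h fun i => round (x i / h)) ∈ s from hx)]
      exact mem_gridCube_round hh x
    · rintro ⟨m, hm⟩
      by_cases hz : gridPoint d h m ∈ s
      · rw [if_pos hz] at hm
        rwa [Tmap_eq_of_mem hh hm]
      · rw [if_neg hz] at hm
        exact absurd hm (Set.notMem_empty x)
  rw [key, measure_iUnion ?_ ?_]
  · congr 1
    funext m
    rw [Measure.smul_apply, Measure.dirac_apply' _ hs, smul_eq_mul]
    by_cases hz : gridPoint d h m ∈ s <;> simp [hz]
  · intro m m' hne
    refine Disjoint.mono ?_ ?_ (gridCube_disjoint hh hne)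
    · by_cases h1 : gridPoint d h m ∈ s <;> simp [h1]
    · by_cases h2 : gridPoint d h m' ∈ s <;> simp [h2]
  · intro m
    by_cases hz : gridPoint d h m ∈ s <;> simp [hz, measurableSet_gridCube]

lemma discretize_singleton {d : ℕ} {h : ℝ} (hh : 0 < h) (μ : Measure (Fin d → ℝ))
    (m : Fin d → ℤ) : discretize h μ {gridPoint d h m} = μ (gridCube d h m) := by
  rw [discretize, Measure.sum_apply _ (measurableSet_singleton _)]
  rw [tsum_eq_single m]
  · rw [Measure.smul_apply, Measure.dirac_apply' _ (measurableSet_singleton _)]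
    simp
  · intro m' hne
    rw [Measure.smul_apply, Measure.dirac_apply' _ (measurableSet_singleton _)]
    have : gridPoint d h m' ∉ ({gridPoint d h m} : Set _) := by
      simp only [Set.mem_singleton_iff]
      exact fun he => hne (gridPoint_injective hh.ne' he)
    simp [Set.indicator_of_notMem this]

lemma countable_range_gridPoint {d : ℕ} {h : ℝ} :
    (Set.range (gridPoint d h)).Countable := Set.countable_range _

lemma discretize_compl_range {d : ℕ} {h : ℝ} (μ : Measure (Fin d → ℝ)) :
    discretize h μ (Set.range (gridPoint d h))ᶜ = 0 := by
  rw [discretize, Measure.sum_apply _ countable_range_gridPoint.measurableSet.compl]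
  refine ENNReal.tsum_eq_zero.mpr fun m => ?_
  rw [Measure.smul_apply, Measure.dirac_apply' _ countable_range_gridPoint.measurableSet.compl,
    Set.indicator_of_notMem (by simp : gridPoint d h m ∉ (Set.range (gridPoint d h))ᶜ)]
  simp

lemma iUnion_gridCube {d : ℕ} {h : ℝ} (hh : 0 < h) :
    (⋃ m, gridCube d h m) = Set.univ :=
  Set.eq_univ_of_forall fun x => Set.mem_iUnion.mpr ⟨_, mem_gridCube_round hh x⟩

section Block
variable {d : ℕ} {h : ℝ}

/-- decomposition of a measure concentrated on the grid product -/
lemma grid_decomp (hh : 0 < h) (π' : Measure ((Fin d → ℝ) × (Fin d → ℝ)))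
    (hconc : π' ((Set.range (gridPoint d h) ×ˢ Set.range (gridPoint d h))ᶜ) = 0)
    {s : Set ((Fin d → ℝ) × (Fin d → ℝ))} (hs : MeasurableSet s) :
    π' s = ∑' p : (Fin d → ℤ) × (Fin d → ℤ),
      π' (s ∩ {(gridPoint d h p.1, gridPoint d h p.2)}) := by
  set G := Set.range (gridPoint d h) with hG
  have hGG : MeasurableSet (G ×ˢ G) :=
    (countable_range_gridPoint.prod countable_range_gridPoint).measurableSet
  have h1 : π' s = π' (s ∩ (G ×ˢ G)) := by
    have := measure_inter_add_diff (μ := π') s hGG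
    have h2 : π' (s \ G ×ˢ G) = 0 :=
      measure_mono_null (fun q hq => hq.2) hconc
    rw [← this, h2, add_zero]
  rw [h1]
  have h2 : s ∩ (G ×ˢ G) = ⋃ p : (Fin d → ℤ) × (Fin d → ℤ),
      (s ∩ {(gridPoint d h p.1, gridPoint d h p.2)}) := by
    ext q
    simp only [Set.mem_inter_iff, Set.mem_prod, Set.mem_iUnion, Set.mem_singleton_iff, hG,
      Set.mem_range]
    constructor
    · rintro ⟨hqs, ⟨m, hm⟩, ⟨m', hm'⟩⟩
      exact ⟨(m, m'), hqs, Prod.ext hm.symm hm'.symm⟩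
    · rintro ⟨p, hqs, rfl⟩
      exact ⟨hqs, ⟨p.1, rfl⟩, ⟨p.2, rfl⟩⟩
  rw [h2, measure_iUnion]
  · intro p p' hne
    simp only [Function.onFun]
    refine Set.disjoint_left.mpr ?_
    rintro q ⟨-, hq⟩ ⟨-, hq'⟩
    simp only [Set.mem_singleton_iff] at hq hq'
    apply hne
    rw [hq] at hq'
    have h1 := congrArg Prod.fst hq'
    have h2 := congrArg Prod.snd hq'
    simp only at h1 h2
    exact Prod.ext (gridPoint_injective hh.ne' h1) (gridPoint_injective hh.ne' h2)
  · exact fun p => hs.inter (measurableSet_singleton _)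

lemma exists_block_coupling (hh : 0 < h)
    (μ ν : Measure (Fin d → ℝ)) [IsFiniteMeasure μ] [IsFiniteMeasure ν]
    (π' : Measure ((Fin d → ℝ) × (Fin d → ℝ)))
    (hπ' : IsCoupling π' (discretize h μ) (discretize h ν)) :
    ∃ π : Measure ((Fin d → ℝ) × (Fin d → ℝ)), IsCoupling π μ ν ∧
      π.map (Prod.map (Tmap d h) (Tmap d h)) = π' := by
  classical
  set G := Set.range (gridPoint d h) with hG
  have hGmeas : MeasurableSet G := countable_range_gridPoint.measurableSet
  set z : (Fin d → ℤ) → (Fin d → ℝ) := gridPoint d h with hz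
  set C : (Fin d → ℤ) → Set (Fin d → ℝ) := gridCube d h with hC
  set w : (Fin d → ℤ) × (Fin d → ℤ) → ℝ≥0∞ := fun p => π' {(z p.1, z p.2)} with hw
  -- concentration of π'
  have hconc : π' ((G ×ˢ G)ᶜ) = 0 := by
    have hsub : (G ×ˢ G)ᶜ ⊆ (Prod.fst ⁻¹' Gᶜ) ∪ (Prod.snd ⁻¹' Gᶜ) := by
      intro q hq
      by_contra hcon
      simp only [Set.mem_union, Set.mem_preimage, Set.mem_compl_iff, not_or, not_not] at hcon
      exact hq ⟨hcon.1, hcon.2⟩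
    refine measure_mono_null hsub (measure_union_null ?_ ?_)
    · rw [← Measure.map_apply measurable_fst hGmeas.compl, hπ'.1]
      exact discretize_compl_range μ
    · rw [← Measure.map_apply measurable_snd hGmeas.compl, hπ'.2]
      exact discretize_compl_range ν
  -- bounds on w
  have hw1 : ∀ p, w p ≤ μ (C p.1) := by
    intro p
    have : ({(z p.1, z p.2)} : Set _) ⊆ Prod.fst ⁻¹' {z p.1} := by
      rintro q hq; rw [Set.mem_singleton_iff] at hq; rw [hq]; rfl
    calc w p ≤ π' (Prod.fst ⁻¹' {z p.1}) := measure_mono this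
      _ = (π'.map Prod.fst) {z p.1} :=
          (Measure.map_apply measurable_fst (measurableSet_singleton _)).symm
      _ = μ (C p.1) := by rw [hπ'.1]; exact discretize_singleton hh μ p.1
  have hw2 : ∀ p, w p ≤ ν (C p.2) := by
    intro p
    have : ({(z p.1, z p.2)} : Set _) ⊆ Prod.snd ⁻¹' {z p.2} := by
      rintro q hq; rw [Set.mem_singleton_iff] at hq; rw [hq]; rfl
    calc w p ≤ π' (Prod.snd ⁻¹' {z p.2}) := measure_mono this
      _ = (π'.map Prod.snd) {z p.2} :=
          (Measure.map_apply measurable_snd (measurableSet_singleton _)).symm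
      _ = ν (C p.2) := by rw [hπ'.2]; exact discretize_singleton hh ν p.2
  -- row and column sums of w
  have hrow : ∀ m, ∑' m', w (m, m') = μ (C m) := by
    intro m
    have hUn : (⋃ m', ({(z m, z m')} : Set _)) = {z m} ×ˢ G := by
      ext q
      simp only [Set.mem_iUnion, Set.mem_singleton_iff, Set.mem_prod, hG, Set.mem_range]
      constructor
      · rintro ⟨m', rfl⟩; exact ⟨rfl, m', rfl⟩
      · rintro ⟨h1, m', h2⟩
        exact ⟨m', Prod.ext h1 h2.symm⟩
    have hdis : Pairwise (Function.onFun Disjoint fun m' => ({(z m, z m')} : Set _)) := by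
      intro a b hne
      simp only [Function.onFun, Set.disjoint_singleton_left, Set.mem_singleton_iff]
      intro hcon
      exact hne (gridPoint_injective hh.ne' (congrArg Prod.snd hcon))
    have h1 : ∑' m', w (m, m') = π' ({z m} ×ˢ G) := by
      rw [← hUn, measure_iUnion hdis fun m' => measurableSet_singleton _]
    have h2 : π' ({z m} ×ˢ G) = π' (Prod.fst ⁻¹' {z m}) := by
      have hBA : Prod.fst ⁻¹' {z m} ∩ Prod.snd ⁻¹' G = {z m} ×ˢ G := rfl
      have := measure_inter_add_diff (μ := π') (Prod.fst ⁻¹' {z m}) (measurable_snd hGmeas)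
      have hnull : π' (Prod.fst ⁻¹' {z m} \ Prod.snd ⁻¹' G) = 0 := by
        refine measure_mono_null ?_ hconc
        rintro q ⟨-, hq2⟩ hq3
        exact hq2 (Set.mem_preimage.mpr hq3.2)
      rw [hBA] at this
      rw [← this, hnull, add_zero]
    rw [h1, h2, ← Measure.map_apply measurable_fst (measurableSet_singleton _), hπ'.1]
    exact discretize_singleton hh μ m
  have hcol : ∀ m', ∑' m, w (m, m') = ν (C m') := by
    intro m'
    have hUn : (⋃ m, ({(z m, z m')} : Set _)) = G ×ˢ {z m'} := by
      ext q
      simp only [Set.mem_iUnion, Set.mem_singleton_iff, Set.mem_prod, hG, Set.mem_range]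
      constructor
      · rintro ⟨m, rfl⟩; exact ⟨⟨m, rfl⟩, rfl⟩
      · rintro ⟨⟨m, h2⟩, h1⟩
        exact ⟨m, Prod.ext h2.symm h1⟩
    have hdis : Pairwise (Function.onFun Disjoint fun m => ({(z m, z m')} : Set _)) := by
      intro a b hne
      simp only [Function.onFun, Set.disjoint_singleton_left, Set.mem_singleton_iff]
      intro hcon
      exact hne (gridPoint_injective hh.ne' (congrArg Prod.fst hcon))
    have h1 : ∑' m, w (m, m') = π' (G ×ˢ {z m'}) := by
      rw [← hUn, measure_iUnion hdis fun m => measurableSet_singleton _]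
    have h2 : π' (G ×ˢ {z m'}) = π' (Prod.snd ⁻¹' {z m'}) := by
      have := measure_inter_add_diff (μ := π') (Prod.snd ⁻¹' {z m'}) (measurable_fst hGmeas)
      have hBA : Prod.snd ⁻¹' {z m'} ∩ Prod.fst ⁻¹' G = G ×ˢ {z m'} := by
        ext q; exact ⟨fun hq => ⟨hq.2, hq.1⟩, fun hq => ⟨hq.2, hq.1⟩⟩
      have hnull : π' (Prod.snd ⁻¹' {z m'} \ Prod.fst ⁻¹' G) = 0 := by
        refine measure_mono_null ?_ hconc
        rintro q ⟨-, hq2⟩ hq3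
        exact hq2 (Set.mem_preimage.mpr hq3.1)
      rw [hBA] at this
      rw [← this, hnull, add_zero]
    rw [h1, h2, ← Measure.map_apply measurable_snd (measurableSet_singleton _), hπ'.2]
    exact discretize_singleton hh ν m'
  -- the block coupling
  set π : Measure ((Fin d → ℝ) × (Fin d → ℝ)) :=
    Measure.sum (fun p : (Fin d → ℤ) × (Fin d → ℤ) =>
      ((μ (C p.1))⁻¹ * (ν (C p.2))⁻¹ * w p) •
        ((μ.restrict (C p.1)).prod (ν.restrict (C p.2)))) with hπ
  have hπs : ∀ {s : Set ((Fin d → ℝ) × (Fin d → ℝ))}, MeasurableSet s → π s =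
      ∑' p : (Fin d → ℤ) × (Fin d → ℤ),
        (μ (C p.1))⁻¹ * (ν (C p.2))⁻¹ * w p *
          ((μ.restrict (C p.1)).prod (ν.restrict (C p.2))) s := by
    intro s hs
    rw [hπ, Measure.sum_apply _ hs]
    simp only [Measure.smul_apply, smul_eq_mul]
  refine ⟨π, ⟨?_, ?_⟩, ?_⟩
  · -- first marginal
    ext s hs
    rw [Measure.map_apply measurable_fst hs, hπs (measurable_fst hs)]
    have hps : ∀ p : (Fin d → ℤ) × (Fin d → ℤ),
        ((μ.restrict (C p.1)).prod (ν.restrict (C p.2))) (Prod.fst ⁻¹' s)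
          = μ (s ∩ C p.1) * ν (C p.2) := by
      intro p
      have : Prod.fst ⁻¹' s = s ×ˢ (Set.univ : Set (Fin d → ℝ)) := (Set.prod_univ).symm
      rw [this, Measure.prod_prod, Measure.restrict_apply hs, Measure.restrict_apply_univ]
    calc (∑' p : (Fin d → ℤ) × (Fin d → ℤ), (μ (C p.1))⁻¹ * (ν (C p.2))⁻¹ * w p *
          ((μ.restrict (C p.1)).prod (ν.restrict (C p.2))) (Prod.fst ⁻¹' s))
        = ∑' p : (Fin d → ℤ) × (Fin d → ℤ),
            (μ (C p.1))⁻¹ * μ (s ∩ C p.1) * w p := by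
          congr 1; funext p
          rw [hps p]
          by_cases hν0 : ν (C p.2) = 0
          · have hw0 : w p = 0 := le_antisymm (hν0 ▸ hw2 p) (zero_le)
            rw [hw0, hν0]; ring
          · have hcancel : (ν (C p.2))⁻¹ * ν (C p.2) = 1 :=
              ENNReal.inv_mul_cancel hν0 (measure_ne_top ν _)
            calc (μ (C p.1))⁻¹ * (ν (C p.2))⁻¹ * w p * (μ (s ∩ C p.1) * ν (C p.2))
                = (μ (C p.1))⁻¹ * μ (s ∩ C p.1) * w p * ((ν (C p.2))⁻¹ * ν (C p.2)) := by
                  ring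
              _ = (μ (C p.1))⁻¹ * μ (s ∩ C p.1) * w p := by rw [hcancel, mul_one]
      _ = ∑' m, (μ (C m))⁻¹ * μ (s ∩ C m) * μ (C m) := by
          rw [ENNReal.tsum_prod (f := fun m m' => (μ (C m))⁻¹ * μ (s ∩ C m) * w (m, m'))]
          congr 1; funext m
          rw [ENNReal.tsum_mul_left, hrow m]
      _ = ∑' m, μ (s ∩ C m) := by
          congr 1; funext m
          by_cases hμ0 : μ (C m) = 0
          · rw [hμ0, measure_mono_null Set.inter_subset_right hμ0]; ring
          · have hcancel : (μ (C m))⁻¹ * μ (C m) = 1 :=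
              ENNReal.inv_mul_cancel hμ0 (measure_ne_top μ _)
            calc (μ (C m))⁻¹ * μ (s ∩ C m) * μ (C m)
                = μ (s ∩ C m) * ((μ (C m))⁻¹ * μ (C m)) := by ring
              _ = μ (s ∩ C m) := by rw [hcancel, mul_one]
      _ = μ s := by
          rw [← measure_iUnion (fun a b hne => Disjoint.mono
              Set.inter_subset_right Set.inter_subset_right (gridCube_disjoint hh hne))
              (fun m => hs.inter (measurableSet_gridCube m)),
            ← Set.inter_iUnion, iUnion_gridCube hh, Set.inter_univ]
  · -- second marginal
    ext s hs
    rw [Measure.map_apply measurable_snd hs, hπs (measurable_snd hs)]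
    have hps : ∀ p : (Fin d → ℤ) × (Fin d → ℤ),
        ((μ.restrict (C p.1)).prod (ν.restrict (C p.2))) (Prod.snd ⁻¹' s)
          = μ (C p.1) * ν (s ∩ C p.2) := by
      intro p
      have : Prod.snd ⁻¹' s = (Set.univ : Set (Fin d → ℝ)) ×ˢ s := (Set.univ_prod).symm
      rw [this, Measure.prod_prod, Measure.restrict_apply hs, Measure.restrict_apply_univ]
    calc (∑' p : (Fin d → ℤ) × (Fin d → ℤ), (μ (C p.1))⁻¹ * (ν (C p.2))⁻¹ * w p *
          ((μ.restrict (C p.1)).prod (ν.restrict (C p.2))) (Prod.snd ⁻¹' s))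
        = ∑' p : (Fin d → ℤ) × (Fin d → ℤ),
            (ν (C p.2))⁻¹ * ν (s ∩ C p.2) * w p := by
          congr 1; funext p
          rw [hps p]
          by_cases hμ0 : μ (C p.1) = 0
          · have hw0 : w p = 0 := le_antisymm (hμ0 ▸ hw1 p) (zero_le)
            rw [hw0, hμ0]; ring
          · have hcancel : (μ (C p.1))⁻¹ * μ (C p.1) = 1 :=
              ENNReal.inv_mul_cancel hμ0 (measure_ne_top μ _)
            calc (μ (C p.1))⁻¹ * (ν (C p.2))⁻¹ * w p * (μ (C p.1) * ν (s ∩ C p.2))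
                = (ν (C p.2))⁻¹ * ν (s ∩ C p.2) * w p * ((μ (C p.1))⁻¹ * μ (C p.1)) := by
                  ring
              _ = (ν (C p.2))⁻¹ * ν (s ∩ C p.2) * w p := by rw [hcancel, mul_one]
      _ = ∑' m', (ν (C m'))⁻¹ * ν (s ∩ C m') * ν (C m') := by
          rw [ENNReal.tsum_prod (f := fun m m' => (ν (C m'))⁻¹ * ν (s ∩ C m') * w (m, m')),
            ENNReal.tsum_comm]
          congr 1; funext m'
          rw [ENNReal.tsum_mul_left, hcol m']
      _ = ∑' m', ν (s ∩ C m') := by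
          congr 1; funext m'
          by_cases hν0 : ν (C m') = 0
          · rw [hν0, measure_mono_null Set.inter_subset_right hν0]; ring
          · have hcancel : (ν (C m'))⁻¹ * ν (C m') = 1 :=
              ENNReal.inv_mul_cancel hν0 (measure_ne_top ν _)
            calc (ν (C m'))⁻¹ * ν (s ∩ C m') * ν (C m')
                = ν (s ∩ C m') * ((ν (C m'))⁻¹ * ν (C m')) := by ring
              _ = ν (s ∩ C m') := by rw [hcancel, mul_one]
      _ = ν s := by
          rw [← measure_iUnion (fun a b hne => Disjoint.mono
              Set.inter_subset_right Set.inter_subset_right (gridCube_disjoint hh hne))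
              (fun m => hs.inter (measurableSet_gridCube m)),
            ← Set.inter_iUnion, iUnion_gridCube hh, Set.inter_univ]
  · -- pushforward equals π'
    ext s hs
    have hS : Measurable (Prod.map (Tmap d h) (Tmap d h)) :=
      measurable_Tmap.prodMap measurable_Tmap
    rw [Measure.map_apply hS hs, hπs (hS hs)]
    have hps : ∀ p : (Fin d → ℤ) × (Fin d → ℤ),
        ((μ.restrict (C p.1)).prod (ν.restrict (C p.2)))
          (Prod.map (Tmap d h) (Tmap d h) ⁻¹' s)
        = if (z p.1, z p.2) ∈ s then μ (C p.1) * ν (C p.2) else 0 := by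
      intro p
      rw [Measure.prod_restrict, Measure.restrict_apply (hS hs)]
      have hset : Prod.map (Tmap d h) (Tmap d h) ⁻¹' s ∩ C p.1 ×ˢ C p.2
          = if (z p.1, z p.2) ∈ s then C p.1 ×ˢ C p.2 else ∅ := by
        by_cases hzs : (z p.1, z p.2) ∈ s
        · rw [if_pos hzs]
          ext q
          constructor
          · rintro ⟨-, hq⟩; exact hq
          · intro hq
            refine ⟨?_, hq⟩
            simp only [Set.mem_preimage, Prod.map]
            rw [Tmap_eq_of_mem hh hq.1, Tmap_eq_of_mem hh hq.2]
            exact hzs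
        · rw [if_neg hzs]
          ext q
          simp only [Set.mem_inter_iff, Set.mem_preimage, Set.mem_empty_iff_false, iff_false]
          rintro ⟨hq1, hq2⟩
          apply hzs
          have : Prod.map (Tmap d h) (Tmap d h) q = (z p.1, z p.2) := by
            simp only [Prod.map]
            rw [Tmap_eq_of_mem hh hq2.1, Tmap_eq_of_mem hh hq2.2]
          rwa [this] at hq1
      rw [hset]
      by_cases hzs : (z p.1, z p.2) ∈ s
      · rw [if_pos hzs, if_pos hzs, Measure.prod_prod]
      · rw [if_neg hzs, if_neg hzs, measure_empty]
    calc (∑' p : (Fin d → ℤ) × (Fin d → ℤ), (μ (C p.1))⁻¹ * (ν (C p.2))⁻¹ * w p *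
          ((μ.restrict (C p.1)).prod (ν.restrict (C p.2)))
            (Prod.map (Tmap d h) (Tmap d h) ⁻¹' s))
        = ∑' p : (Fin d → ℤ) × (Fin d → ℤ),
            π' (s ∩ {(z p.1, z p.2)}) := by
          congr 1; funext p
          rw [hps p]
          by_cases hzs : (z p.1, z p.2) ∈ s
          · rw [if_pos hzs]
            have hsi : s ∩ {(z p.1, z p.2)} = {(z p.1, z p.2)} :=
              Set.inter_eq_self_of_subset_right (Set.singleton_subset_iff.mpr hzs)
            rw [hsi]
            by_cases hw0 : w p = 0
            · rw [show π' {(z p.1, z p.2)} = w p from rfl, hw0]; ring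
            · have hμ0 : μ (C p.1) ≠ 0 := fun hc => hw0 (le_antisymm (hc ▸ hw1 p) (zero_le))
              have hν0 : ν (C p.2) ≠ 0 := fun hc => hw0 (le_antisymm (hc ▸ hw2 p) (zero_le))
              calc (μ (C p.1))⁻¹ * (ν (C p.2))⁻¹ * w p * (μ (C p.1) * ν (C p.2))
                  = w p * (((μ (C p.1))⁻¹ * μ (C p.1)) * ((ν (C p.2))⁻¹ * ν (C p.2))) := by
                    ring
                _ = w p := by
                    rw [ENNReal.inv_mul_cancel hμ0 (measure_ne_top μ _),
                      ENNReal.inv_mul_cancel hν0 (measure_ne_top ν _), one_mul, mul_one]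
                _ = π' {(z p.1, z p.2)} := rfl
          · rw [if_neg hzs, mul_zero]
            have hsi : s ∩ {(z p.1, z p.2)} = ∅ := by
              ext q
              simp only [Set.mem_inter_iff, Set.mem_singleton_iff, Set.mem_empty_iff_false,
                iff_false]
              rintro ⟨hq1, rfl⟩
              exact hzs hq1
            rw [hsi, measure_empty]
      _ = π' s := (grid_decomp hh π' hconc hs).symm
end Block

/-- couplings of probability measures are probability measures -/
lemma isProbabilityMeasure_coupling {α β : Type*} [MeasurableSpace α] [MeasurableSpace β]
    {π : Measure (α × β)} {μ : Measure α} {ν : Measure β} [IsProbabilityMeasure μ]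
    (hπ : IsCoupling π μ ν) : IsProbabilityMeasure π := by
  constructor
  rw [← Set.preimage_univ (f := Prod.fst),
    ← Measure.map_apply measurable_fst MeasurableSet.univ, hπ.1, measure_univ]

lemma coupling_concentration {α β : Type*} [MeasurableSpace α] [MeasurableSpace β]
    {π : Measure (α × β)} {μ : Measure α} {ν : Measure β} (hπ : IsCoupling π μ ν)
    {A : Set α} {B : Set β} (hA : MeasurableSet A) (hB : MeasurableSet B)
    (hμA : μ Aᶜ = 0) (hνB : ν Bᶜ = 0) : π ((A ×ˢ B)ᶜ) = 0 := by
  have hsub : (A ×ˢ B)ᶜ ⊆ (Prod.fst ⁻¹' Aᶜ) ∪ (Prod.snd ⁻¹' Bᶜ) := by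
    intro q hq
    by_contra hcon
    simp only [Set.mem_union, Set.mem_preimage, Set.mem_compl_iff, not_or, not_not] at hcon
    exact hq ⟨hcon.1, hcon.2⟩
  refine measure_mono_null hsub (measure_union_null ?_ ?_)
  · rw [← Measure.map_apply measurable_fst hA.compl, hπ.1]; exact hμA
  · rw [← Measure.map_apply measurable_snd hB.compl, hπ.2]; exact hνB

lemma isCoupling_prod {α β : Type*} [MeasurableSpace α] [MeasurableSpace β]
    (μ : Measure α) (ν : Measure β) [IsProbabilityMeasure μ] [IsProbabilityMeasure ν] :
    IsCoupling (μ.prod ν) μ ν :=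
  ⟨by rw [Measure.map_fst_prod, measure_univ, one_smul],
   by rw [Measure.map_snd_prod, measure_univ, one_smul]⟩

lemma integrable_of_conc {α : Type*} [MeasurableSpace α] {π : Measure α} [IsFiniteMeasure π]
    {f : α → ℝ} (hf : AEStronglyMeasurable f π) {A : Set α} (hA : π Aᶜ = 0) {M : ℝ}
    (hM : ∀ q ∈ A, ‖f q‖ ≤ M) : Integrable f π := by
  refine ⟨hf, HasFiniteIntegral.of_bounded (C := M) ?_⟩
  filter_upwards [(mem_ae_iff (μ := π)).mpr hA] with q hq
  exact hM q hq

lemma integral_le_add {α : Type*} [MeasurableSpace α] {π : Measure α} [IsProbabilityMeasure π]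
    {f g : α → ℝ} {A : Set α} {ε : ℝ} (hf : Integrable f π) (hg : Integrable g π)
    (hA : π Aᶜ = 0) (hle : ∀ q ∈ A, f q ≤ g q + ε) :
    ∫ q, f q ∂π ≤ (∫ q, g q ∂π) + ε := by
  have h1 : ∫ q, f q ∂π ≤ ∫ q, (g q + ε) ∂π := by
    refine integral_mono_ae hf (hg.add (integrable_const ε)) ?_
    filter_upwards [(mem_ae_iff (μ := π)).mpr hA] with q hq
    exact hle q hq
  rwa [integral_add hg (integrable_const ε), integral_const, probReal_univ,
    one_smul] at h1

lemma neg_le_integral {α : Type*} [MeasurableSpace α] {π : Measure α} [IsProbabilityMeasure π]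
    {f : α → ℝ} {A : Set α} {M : ℝ} (hf : Integrable f π)
    (hA : π Aᶜ = 0) (hM : ∀ q ∈ A, ‖f q‖ ≤ M) : -M ≤ ∫ q, f q ∂π := by
  have h1 : ∫ q, (-M : ℝ) ∂π ≤ ∫ q, f q ∂π := by
    refine integral_mono_ae (integrable_const _) hf ?_
    filter_upwards [(mem_ae_iff (μ := π)).mpr hA] with q hq
    exact neg_le_of_abs_le (hM q hq)
  rwa [integral_const, probReal_univ, one_smul] at h1

end OTAux

open OTAux

/-- Convergence of the discretized optimal transportation cost:
`W_c(μ^h, ν^h) → W_c(μ, ν)` as `h → 0`. -/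
theorem transportCost_discretize_tendsto
    {d : ℕ} (μ ν : Measure (Fin d → ℝ))
    (hμ : IsProbabilityMeasure μ) (hν : IsProbabilityMeasure ν)
    (hμcompact : ∃ K : Set (Fin d → ℝ), IsCompact K ∧ μ Kᶜ = 0)
    (hνcompact : ∃ K : Set (Fin d → ℝ), IsCompact K ∧ ν Kᶜ = 0)
    (c : (Fin d → ℝ) × (Fin d → ℝ) → ℝ) (hc : Continuous c) :
    Tendsto (fun h : ℝ => transportCost c (discretize h μ) (discretize h ν))
      (𝓝[>] (0 : ℝ)) (𝓝 (transportCost c μ ν)) := by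
  obtain ⟨K, hKc, hKn⟩ := hμcompact
  obtain ⟨L, hLc, hLn⟩ := hνcompact
  set K₁ := cthickening 1 K with hK₁
  set L₁ := cthickening 1 L with hL₁
  have hK₁c : IsCompact K₁ := hKc.cthickening
  have hL₁c : IsCompact L₁ := hLc.cthickening
  have hKsub : K ⊆ K₁ := self_subset_cthickening K
  have hLsub : L ⊆ L₁ := self_subset_cthickening L
  have hK₁closed : IsClosed K₁ := isClosed_cthickening
  have hL₁closed : IsClosed L₁ := isClosed_cthickening
  have hμK₁ : μ K₁ᶜ = 0 := measure_mono_null (Set.compl_subset_compl.mpr hKsub) hKn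
  have hνL₁ : ν L₁ᶜ = 0 := measure_mono_null (Set.compl_subset_compl.mpr hLsub) hLn
  obtain ⟨M, hM⟩ := (hK₁c.prod hL₁c).exists_bound_of_continuousOn hc.continuousOn
  have hUC := (hK₁c.prod hL₁c).uniformContinuousOn_of_continuous hc.continuousOn
  rw [Metric.uniformContinuousOn_iff] at hUC
  -- the cost set for μ, ν
  set Sμν := {r : ℝ | ∃ π : Measure ((Fin d → ℝ) × (Fin d → ℝ)),
    IsCoupling π μ ν ∧ r = ∫ q, c q ∂π} with hSμν
  have hKLmeas : MeasurableSet (K ×ˢ L) :=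
    (hKc.isClosed.measurableSet.prod hLc.isClosed.measurableSet)
  have hK₁L₁meas : MeasurableSet (K₁ ×ˢ L₁) :=
    (hK₁closed.measurableSet.prod hL₁closed.measurableSet)
  -- integrability of c for couplings of μ and ν
  have hintc : ∀ π : Measure ((Fin d → ℝ) × (Fin d → ℝ)), IsCoupling π μ ν →
      Integrable c π := by
    intro π hπ
    haveI := isProbabilityMeasure_coupling hπ
    exact integrable_of_conc hc.aestronglyMeasurable
      (coupling_concentration hπ hKc.isClosed.measurableSet hLc.isClosed.measurableSet hKn hLn)
      (fun q hq => hM q ⟨hKsub hq.1, hLsub hq.2⟩)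
  have hSne : Sμν.Nonempty := ⟨∫ q, c q ∂(μ.prod ν), μ.prod ν, isCoupling_prod μ ν, rfl⟩
  have hSbdd : ∀ r ∈ Sμν, -M ≤ r := by
    rintro r ⟨π, hπ, rfl⟩
    haveI := isProbabilityMeasure_coupling hπ
    exact neg_le_integral (hintc π hπ)
      (coupling_concentration hπ hKc.isClosed.measurableSet hLc.isClosed.measurableSet hKn hLn)
      (fun q hq => hM q ⟨hKsub hq.1, hLsub hq.2⟩)
  rw [Metric.tendsto_nhdsWithin_nhds]
  intro ε hε
  obtain ⟨δ, hδ0, hδ⟩ := hUC (ε/2) (by linarith)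
  refine ⟨min δ 2, lt_min hδ0 two_pos, ?_⟩
  intro h hmem hdist
  have hh : (0 : ℝ) < h := hmem
  rw [Real.dist_eq, sub_zero, abs_of_pos hh] at hdist
  have hhδ : h < δ := lt_of_lt_of_le hdist (min_le_left _ _)
  have hh2 : h ≤ 2 := le_of_lt (lt_of_lt_of_le hdist (min_le_right _ _))
  set T := Tmap d h with hT
  set S := Prod.map T T with hS
  have hSmeas : Measurable S := measurable_Tmap.prodMap measurable_Tmap
  -- T maps K into K₁, L into L₁
  have hTK : ∀ x ∈ K, T x ∈ K₁ :=
    fun x hx => mem_cthickening_of_dist_le _ x 1 K hx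
      (le_trans (dist_Tmap_le hh x) (by linarith))
  have hTL : ∀ x ∈ L, T x ∈ L₁ :=
    fun x hx => mem_cthickening_of_dist_le _ x 1 L hx
      (le_trans (dist_Tmap_le hh x) (by linarith))
  -- pointwise cost comparison on K ×ˢ L
  have hcomp : ∀ q ∈ K ×ˢ L, |c (S q) - c q| ≤ ε/2 := by
    rintro ⟨a, b⟩ ⟨ha, hb⟩
    have hq1 : (a, b) ∈ K₁ ×ˢ L₁ := ⟨hKsub ha, hLsub hb⟩
    have hq2 : S (a, b) ∈ K₁ ×ˢ L₁ := ⟨hTK a ha, hTL b hb⟩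
    have hdq : dist (S (a, b)) (a, b) < δ := by
      rw [show S (a, b) = (T a, T b) from rfl, Prod.dist_eq]
      have h1 := dist_Tmap_le hh a
      have h2 := dist_Tmap_le hh b
      have : max (dist (T a) a) (dist (T b) b) ≤ h / 2 := max_le h1 h2
      refine lt_of_le_of_lt this (by linarith)
    have := hδ _ hq2 _ hq1 hdq
    rw [Real.dist_eq] at this
    exact le_of_lt this
  -- the discretized measures
  haveI hpμh : IsProbabilityMeasure (discretize h μ) := by
    rw [discretize_eq_map hh]
    exact Measure.isProbabilityMeasure_map measurable_Tmap.aemeasurable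
  haveI hpνh : IsProbabilityMeasure (discretize h ν) := by
    rw [discretize_eq_map hh]
    exact Measure.isProbabilityMeasure_map measurable_Tmap.aemeasurable
  -- concentration of discretized measures on K₁, L₁
  have hμhK₁ : discretize h μ K₁ᶜ = 0 := by
    rw [discretize_eq_map hh, Measure.map_apply measurable_Tmap hK₁closed.measurableSet.compl]
    refine measure_mono_null ?_ hKn
    intro x hx hxK
    exact hx (hTK x hxK)
  have hνhL₁ : discretize h ν L₁ᶜ = 0 := by
    rw [discretize_eq_map hh, Measure.map_apply measurable_Tmap hL₁closed.measurableSet.compl]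
    refine measure_mono_null ?_ hLn
    intro x hx hxL
    exact hx (hTL x hxL)
  -- the cost set for the discretized measures
  set Sh := {r : ℝ | ∃ π : Measure ((Fin d → ℝ) × (Fin d → ℝ)),
    IsCoupling π (discretize h μ) (discretize h ν) ∧ r = ∫ q, c q ∂π} with hSh
  have hintch : ∀ π : Measure ((Fin d → ℝ) × (Fin d → ℝ)),
      IsCoupling π (discretize h μ) (discretize h ν) → Integrable c π := by
    intro π hπ
    haveI := isProbabilityMeasure_coupling hπ
    exact integrable_of_conc hc.aestronglyMeasurable
      (coupling_concentration hπ hK₁closed.measurableSet hL₁closed.measurableSet hμhK₁ hνhL₁)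
      (fun q hq => hM q hq)
  have hShne : Sh.Nonempty :=
    ⟨∫ q, c q ∂((discretize h μ).prod (discretize h ν)), (discretize h μ).prod (discretize h ν),
      isCoupling_prod _ _, rfl⟩
  have hShbdd : ∀ r ∈ Sh, -M ≤ r := by
    rintro r ⟨π, hπ, rfl⟩
    haveI := isProbabilityMeasure_coupling hπ
    exact neg_le_integral (hintch π hπ)
      (coupling_concentration hπ hK₁closed.measurableSet hL₁closed.measurableSet hμhK₁ hνhL₁)
      (fun q hq => hM q hq)
  -- upper bound: W_h ≤ W + ε/2
  have hW : transportCost c μ ν = sInf Sμν := rfl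
  have hWh : transportCost c (discretize h μ) (discretize h ν) = sInf Sh := rfl
  have hupper : transportCost c (discretize h μ) (discretize h ν)
      ≤ transportCost c μ ν + ε/2 := by
    have : ∀ r ∈ Sμν, transportCost c (discretize h μ) (discretize h ν) - ε/2 ≤ r := by
      rintro r ⟨π, hπ, rfl⟩
      haveI := isProbabilityMeasure_coupling hπ
      have hπconc := coupling_concentration hπ hKc.isClosed.measurableSet
        hLc.isClosed.measurableSet hKn hLn
      have hcoup : IsCoupling (π.map S) (discretize h μ) (discretize h ν) := by
        constructor
        · rw [Measure.map_map measurable_fst hSmeas,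
            show (Prod.fst ∘ S) = (T ∘ Prod.fst) from rfl,
            ← Measure.map_map measurable_Tmap measurable_fst, hπ.1, discretize_eq_map hh]
        · rw [Measure.map_map measurable_snd hSmeas,
            show (Prod.snd ∘ S) = (T ∘ Prod.snd) from rfl,
            ← Measure.map_map measurable_Tmap measurable_snd, hπ.2, discretize_eq_map hh]
      have hintcS : Integrable (fun q => c (S q)) π :=
        integrable_of_conc (hc.stronglyMeasurable.comp_measurable hSmeas).aestronglyMeasurable
          hπconc (fun q hq => hM (S q) ⟨hTK q.1 hq.1, hTL q.2 hq.2⟩)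
      have h1 : transportCost c (discretize h μ) (discretize h ν) ≤ ∫ q, c q ∂(π.map S) :=
        csInf_le ⟨-M, hShbdd⟩ ⟨π.map S, hcoup, rfl⟩
      have h2 : ∫ q, c q ∂(π.map S) = ∫ q, c (S q) ∂π :=
        integral_map hSmeas.aemeasurable hc.aestronglyMeasurable
      have h3 : ∫ q, c (S q) ∂π ≤ (∫ q, c q ∂π) + ε/2 :=
        integral_le_add hintcS (hintc π hπ) hπconc
          (fun q hq => by have := hcomp q hq; have := abs_le.mp this; linarith [this.1])
      rw [h2] at h1
      linarith
    linarith [le_csInf hSne this, hW]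
  -- lower bound: W ≤ W_h + ε/2
  have hlower : transportCost c μ ν
      ≤ transportCost c (discretize h μ) (discretize h ν) + ε/2 := by
    have : ∀ r ∈ Sh, transportCost c μ ν - ε/2 ≤ r := by
      rintro r ⟨π', hπ', rfl⟩
      obtain ⟨π, hπ, hpush⟩ := exists_block_coupling hh μ ν π' hπ'
      haveI := isProbabilityMeasure_coupling hπ
      have hπconc := coupling_concentration hπ hKc.isClosed.measurableSet
        hLc.isClosed.measurableSet hKn hLn
      have hintcS : Integrable (fun q => c (S q)) π :=
        integrable_of_conc (hc.stronglyMeasurable.comp_measurable hSmeas).aestronglyMeasurable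
          hπconc (fun q hq => hM (S q) ⟨hTK q.1 hq.1, hTL q.2 hq.2⟩)
      have h1 : transportCost c μ ν ≤ ∫ q, c q ∂π :=
        csInf_le ⟨-M, hSbdd⟩ ⟨π, hπ, rfl⟩
      have h2 : ∫ q, c q ∂π ≤ (∫ q, c (S q) ∂π) + ε/2 :=
        integral_le_add (hintc π hπ) hintcS hπconc
          (fun q hq => by have := abs_le.mp (hcomp q hq); linarith [this.2])
      have h3 : ∫ q, c (S q) ∂π = ∫ q, c q ∂π' := by
        rw [← hpush, integral_map hSmeas.aemeasurable hc.aestronglyMeasurable]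
      linarith
    linarith [le_csInf hShne this, hWh]
  rw [Real.dist_eq]
  have : |transportCost c (discretize h μ) (discretize h ν) - transportCost c μ ν| ≤ ε/2 :=
    abs_le.mpr ⟨by linarith, by linarith⟩
  linarith [this, half_lt_self hε]
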